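/- Let n ≥ 3 be an integer which is not a power of 2, let K = Q(ζ_n) with ring of integers O_K, and let ι denote complex conjugation acting on O_K. Then both Tate cohomology groups Ĥ^0(Z/2, O_K) = O_K^ι / (1+ι)O_K and H^1(Z/2, O_K) = {x ∈ O_K : ι(x) = -x} / (1-ι)O_K vanish. -/

import Mathlib

open NumberField

/-- If a domain contains `ξ ≠ 1` with `ξ ^ (2k+1) = 1`, `k ≠ 0`, and `σ ξ * ξ = 1`,
then there is an element `e` with `e + σ e = 1`. -/
lemma exists_trace_one {R : Type*} [CommRing R] [IsDomain R] (σ : R ≃+* R)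
    (ξ : R) (k : ℕ) (hk : k ≠ 0) (hξm : ξ ^ (2 * k + 1) = 1) (hξ1 : ξ ≠ 1)
    (hσξ : σ ξ * ξ = 1) : ∃ e : R, e + σ e = 1 := by
  have hσpow : σ ξ = ξ ^ (2 * k) := by
    have h1 : ξ * ξ ^ (2 * k) = 1 := by
      rw [← pow_succ']; exact hξm
    calc σ ξ = σ ξ * (ξ * ξ ^ (2 * k)) := by rw [h1, mul_one]
      _ = (σ ξ * ξ) * ξ ^ (2 * k) := by ring
      _ = ξ ^ (2 * k) := by rw [hσξ, one_mul]
  have hgeom : (∑ j ∈ Finset.range (2 * k + 1), ξ ^ j) = 0 := by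
    have h := geom_sum_mul ξ (2 * k + 1)
    rw [hξm, sub_self] at h
    rcases mul_eq_zero.mp h with h' | h'
    · exact h'
    · exact absurd (sub_eq_zero.mp h') hξ1
  -- hence ∑_{j < 2k} ξ^(j+1) = -1
  have hsum : (∑ j ∈ Finset.range (2 * k), ξ ^ (j + 1)) = -1 := by
    have h := Finset.sum_range_succ' (fun j => ξ ^ j) (2 * k)
    rw [hgeom] at h
    simp only [pow_zero] at h
    linear_combination -h
  refine ⟨-∑ j ∈ Finset.range k, ξ ^ (j + 1), ?_⟩
  have hσe : σ (-∑ j ∈ Finset.range k, ξ ^ (j + 1))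
      = -∑ j ∈ Finset.range k, ξ ^ (k + j + 1) := by
    rw [map_neg, map_sum]
    congr 1
    rw [← Finset.sum_range_reflect (fun j => ξ ^ (k + j + 1)) k]
    apply Finset.sum_congr rfl
    intro j hj
    rw [Finset.mem_range] at hj
    rw [map_pow, hσpow, ← pow_mul]
    have h1 : 2 * k * (j + 1) = (2 * k + 1) * j + (2 * k - j) := by
      have hj' : j ≤ 2 * k := by omega
      zify [hj']; ring
    have h2 : k + (k - 1 - j) + 1 = 2 * k - j := by omega
    rw [h2, h1, pow_add, pow_mul, hξm, one_pow, one_mul]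
  rw [hσe]
  have hsplit : (∑ j ∈ Finset.range (2 * k), ξ ^ (j + 1))
      = (∑ j ∈ Finset.range k, ξ ^ (j + 1)) + ∑ j ∈ Finset.range k, ξ ^ (k + j + 1) := by
    rw [two_mul, Finset.sum_range_add]
  rw [hsplit] at hsum
  linear_combination -hsum

/-- Let `n ≥ 3` not be a power of `2`, `K = ℚ(ζ_n)` and `ι = σ` the complex conjugation
on `𝓞 K` (the ring automorphism with `σ ζ = ζ⁻¹`).  Then the Tate cohomology groups
`Ĥ⁰(ℤ/2, 𝓞 K) = 𝓞 K^σ/(1+σ)𝓞 K` and `H¹(ℤ/2, 𝓞 K) = {x : σ x = -x}/(1-σ)𝓞 K` vanish. -/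
theorem stmt4 (n : ℕ) (hn0 : 0 < n) (hn : 3 ≤ n) (hpow : ¬ ∃ k, n = 2 ^ k)
    (K : Type*) [Field K] [NumberField K]
    [IsCyclotomicExtension {n} ℚ K]
    (ζ : 𝓞 K) (hζ : IsPrimitiveRoot ζ n)
    (σ : 𝓞 K ≃+* 𝓞 K) (hσ : σ ζ * ζ = 1) :
    (∀ x : 𝓞 K, σ x = x → ∃ y : 𝓞 K, x = y + σ y) ∧
    (∀ x : 𝓞 K, σ x = -x → ∃ y : 𝓞 K, x = y - σ y) := by
  -- the odd part `m` of `n`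
  set v := n.factorization 2 with hv
  set m := n / 2 ^ v with hm
  have hnm : 2 ^ v * m = n := Nat.ordProj_mul_ordCompl_eq_self n 2
  have hmodd : ¬ 2 ∣ m := Nat.not_dvd_ordCompl Nat.prime_two (by omega)
  have hm1 : m ≠ 1 := by
    intro h
    rw [h, mul_one] at hnm
    exact hpow ⟨v, hnm.symm⟩
  have hm0 : m ≠ 0 := by
    intro h; rw [h, mul_zero] at hnm; omega
  obtain ⟨k, hk⟩ : ∃ k, m = 2 * k + 1 := ⟨m / 2, by omega⟩
  have hk0 : k ≠ 0 := by omega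
  -- the primitive `m`-th root of unity `ξ = ζ ^ (2 ^ v)`
  set ξ : 𝓞 K := ζ ^ (2 ^ v) with hξ
  have hξprim : IsPrimitiveRoot ξ m := hζ.pow hn0 (by rw [← hnm, mul_comm])
  have hξ1 : ξ ≠ 1 := hξprim.ne_one (by omega)
  have hξm : ξ ^ (2 * k + 1) = 1 := by
    rw [← hk, hξ, ← pow_mul, hnm, hζ.pow_eq_one]
  have hσξ : σ ξ * ξ = 1 := by
    rw [hξ, map_pow, ← mul_pow, hσ, one_pow]
  obtain ⟨e, he⟩ := exists_trace_one σ ξ k hk0 hξm hξ1 hσξ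
  constructor
  · intro x hx
    refine ⟨x * e, ?_⟩
    rw [map_mul, hx]
    calc x = x * (e + σ e) := by rw [he, mul_one]
      _ = x * e + x * σ e := by ring
  · intro x hx
    refine ⟨x * e, ?_⟩
    rw [map_mul, hx]
    calc x = x * (e + σ e) := by rw [he, mul_one]
      _ = x * e - -x * σ e := by ring
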